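/- For every odd complete graph K_{2m+1} with m ≥ 1, the line graph L(K_{2m+1}) is a core: every graph homomorphism from L(K_{2m+1}) to itself is an automorphism. -/

import Mathlib

/-- The line graph of the complete graph `K_n`: vertices are the 2-element
subsets of an `n`-set, adjacent when they intersect. -/
def lineK (n : ℕ) : SimpleGraph {e : Finset (Fin n) // e.card = 2} where
  Adj e f := e ≠ f ∧ (e.1 ∩ f.1).Nonempty
  symm := by
    constructor
    intro a b h
    exact ⟨h.1.symm, by rw [Finset.inter_comm]; exact h.2⟩
  loopless := by
    constructor
    intro a h
    exact h.1 rfl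

section Aux

open Finset

variable {N : ℕ}

/-- Vertex type of `lineK N`. -/
abbrev EV (N : ℕ) := {e : Finset (Fin N) // e.card = 2}

lemma pair_eq_of_mem {e : Finset (Fin N)} (he : e.card = 2) {a b : Fin N}
    (ha : a ∈ e) (hb : b ∈ e) (hab : a ≠ b) : e = ({a, b} : Finset (Fin N)) := by
  refine (Finset.eq_of_subset_of_card_le ?_ ?_).symm
  · intro x hx
    rcases Finset.mem_insert.1 hx with h | h
    · exact h ▸ ha
    · exact (Finset.mem_singleton.1 h) ▸ hb
  · rw [Finset.card_pair hab, he]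

lemma exists_other {e : Finset (Fin N)} (he : e.card = 2) {a : Fin N} (ha : a ∈ e) :
    ∃ b, b ≠ a ∧ e = {a, b} := by
  obtain ⟨x, y, hxy, rfl⟩ := Finset.card_eq_two.1 he
  rcases Finset.mem_insert.1 ha with rfl | h
  · exact ⟨y, hxy.symm, rfl⟩
  · rw [Finset.mem_singleton] at h; subst h
    exact ⟨x, hxy, Finset.pair_comm x a⟩

/-- Two vertices sharing a point are adjacent. -/
lemma adj_of (e f : EV N) (hne : e ≠ f) {x : Fin N} (hx : x ∈ e.1) (hy : x ∈ f.1) :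
    (lineK N).Adj e f := ⟨hne, ⟨x, Finset.mem_inter.2 ⟨hx, hy⟩⟩⟩

/-- The vertex of `lineK N` corresponding to the pair `{a, b}`. -/
def ed {a b : Fin N} (h : a ≠ b) : EV N := ⟨{a, b}, Finset.card_pair h⟩

lemma exists_fresh (s : Finset (Fin N)) (h : s.card < N) : ∃ x, x ∉ s := by
  by_contra hc
  push_neg at hc
  have h2 : (Finset.univ : Finset (Fin N)).card ≤ s.card :=
    Finset.card_le_card (fun x _ => hc x)
  rw [Finset.card_fin] at h2
  omega

/-- An independent set (pairwise disjoint pairs) in `lineK (2m+1)` has at most `m` elements. -/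
lemma matching_card_le (m : ℕ) (A : Finset (EV (2 * m + 1)))
    (hA : ∀ e ∈ A, ∀ f ∈ A, e ≠ f → e.1 ∩ f.1 = ∅) : A.card ≤ m := by
  classical
  have hd : ∀ e ∈ A, ∀ f ∈ A, e ≠ f → Disjoint e.1 f.1 := fun e he f hf hne =>
    Finset.disjoint_iff_inter_eq_empty.2 (hA e he f hf hne)
  have hcard : (A.biUnion (fun e => e.1)).card = ∑ e ∈ A, e.1.card :=
    Finset.card_biUnion hd
  have h2 : ∑ e ∈ A, e.1.card = 2 * A.card := by
    rw [Finset.sum_congr rfl (fun e _ => e.2), Finset.sum_const, smul_eq_mul, mul_comm]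
  have hle : (A.biUnion (fun e => e.1)).card ≤ 2 * m + 1 := by
    have := Finset.card_le_card (Finset.subset_univ (A.biUnion (fun e => e.1)))
    rwa [Finset.card_fin] at this
  omega

/-- There is no vertex `w` through which every image of `φ` passes. -/
lemma no_const_star (m : ℕ) (hm : 1 ≤ m)
    (φ : lineK (2 * m + 1) →g lineK (2 * m + 1)) (w : Fin (2 * m + 1))
    (h : ∀ e : EV (2 * m + 1), w ∈ (φ e).1) : False := by
  classical
  -- total number of vertices
  have htot : (Finset.univ : Finset (EV (2 * m + 1))).card = m * (2 * m + 1) := by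
    rw [Finset.card_univ, Fintype.card_finset_len, Fintype.card_fin,
      Nat.choose_two_right]
    have h1 : 2 * m + 1 - 1 = 2 * m := by omega
    have : (2 * m + 1) * (2 * m + 1 - 1) = (m * (2 * m + 1)) * 2 := by rw [h1]; ring
    rw [this, Nat.mul_div_cancel _ (by norm_num)]
  set S : Finset (EV (2 * m + 1)) := Finset.univ.filter (fun g => w ∈ g.1) with hS
  have hmap : ∀ e : EV (2 * m + 1), e ∈ Finset.univ → φ e ∈ S := by
    intro e _
    simp only [hS, Finset.mem_filter, Finset.mem_univ, true_and]
    exact h e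
  have hsum := Finset.card_eq_sum_card_fiberwise hmap
  have hfib : ∀ g ∈ S, (Finset.univ.filter (fun e => φ e = g)).card ≤ m := by
    intro g _
    apply matching_card_le
    intro e he f hf hne
    rw [Finset.mem_filter] at he hf
    by_contra hint
    have hadj : (lineK (2 * m + 1)).Adj e f :=
      ⟨hne, Finset.nonempty_iff_ne_empty.2 hint⟩
    exact (φ.map_adj hadj).1 (he.2.trans hf.2.symm)
  have hSle : S.card ≤ 2 * m := by
    have hmaps : ∀ g ∈ S, g.1.erase w ∈
        Finset.powersetCard 1 ((Finset.univ : Finset (Fin (2 * m + 1))).erase w) := by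
      intro g hg
      rw [hS, Finset.mem_filter] at hg
      rw [Finset.mem_powersetCard]
      constructor
      · intro x hx
        rw [Finset.mem_erase] at hx ⊢
        exact ⟨hx.1, Finset.mem_univ x⟩
      · rw [Finset.card_erase_of_mem hg.2, g.2]
    have hinj : Set.InjOn (fun g : EV (2 * m + 1) => g.1.erase w) S := by
      intro g hg g' hg' hgg
      rw [Finset.mem_coe, hS, Finset.mem_filter] at hg hg'
      apply Subtype.ext
      rw [← Finset.insert_erase hg.2, ← Finset.insert_erase hg'.2]
      simp only at hgg
      rw [hgg]
    have hb := Finset.card_le_card_of_injOn _ hmaps hinj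
    rw [Finset.card_powersetCard, Finset.card_erase_of_mem (Finset.mem_univ w),
      Finset.card_fin, Nat.choose_one_right] at hb
    omega
  have hbig : (Finset.univ : Finset (EV (2 * m + 1))).card ≤ S.card * m := by
    rw [hsum]
    calc ∑ g ∈ S, (Finset.univ.filter (fun e => φ e = g)).card
        ≤ S.card • m := Finset.sum_le_card_nsmul S _ m hfib
      _ = S.card * m := by rw [smul_eq_mul]
  rw [htot] at hbig
  have : S.card * m ≤ 2 * m * m := Nat.mul_le_mul_right m hSle
  nlinarith

/-- The images of all edges through a fixed point `v` share a common point. -/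
lemma exists_common (m : ℕ) (hm : 1 ≤ m)
    (φ : lineK (2 * m + 1) →g lineK (2 * m + 1)) (v : Fin (2 * m + 1)) :
    ∃ w, ∀ e : EV (2 * m + 1), v ∈ e.1 → w ∈ (φ e).1 := by
  classical
  obtain ⟨a, ha⟩ := exists_fresh ({v} : Finset (Fin (2 * m + 1)))
    (by rw [Finset.card_singleton]; omega)
  have hav : a ≠ v := by simpa using ha
  obtain ⟨b, hb⟩ := exists_fresh ({v, a} : Finset (Fin (2 * m + 1)))
    (by
      have : ({v, a} : Finset (Fin (2 * m + 1))).card ≤ 2 :=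
        le_trans (Finset.card_insert_le _ _) (by rw [Finset.card_singleton])
      omega)
  simp only [Finset.mem_insert, Finset.mem_singleton, not_or] at hb
  obtain ⟨hbv, hba⟩ := hb
  set e1 : EV (2 * m + 1) := ed (Ne.symm hav) with he1
  set e2 : EV (2 * m + 1) := ed (Ne.symm hbv) with he2
  have he12 : e1 ≠ e2 := by
    intro hcon
    have : ({v, a} : Finset (Fin (2 * m + 1))) = {v, b} := congrArg Subtype.val hcon
    have hbmem : b ∈ ({v, a} : Finset (Fin (2 * m + 1))) := by
      rw [this]; simp
    simp only [Finset.mem_insert, Finset.mem_singleton] at hbmem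
    tauto
  have hve1 : v ∈ e1.1 := by simp [he1, ed]
  have hve2 : v ∈ e2.1 := by simp [he2, ed]
  have hg12 : (lineK (2 * m + 1)).Adj (φ e1) (φ e2) :=
    φ.map_adj (adj_of e1 e2 he12 hve1 hve2)
  obtain ⟨w, hw⟩ := hg12.2
  rw [Finset.mem_inter] at hw
  obtain ⟨hw1, hw2⟩ := hw
  refine ⟨w, ?_⟩
  intro e hve
  by_contra hwno
  -- e = {v, x} with x ∉ {v, a, b}
  obtain ⟨x, hxv, hex⟩ := exists_other e.2 hve
  have hne1 : e ≠ e1 := fun hcon => hwno (by rw [hcon]; exact hw1)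
  have hne2 : e ≠ e2 := fun hcon => hwno (by rw [hcon]; exact hw2)
  have hxa : x ≠ a := by
    rintro rfl
    exact hne1 (Subtype.ext (by rw [hex]; rfl))
  have hxb : x ≠ b := by
    rintro rfl
    exact hne2 (Subtype.ext (by rw [hex]; rfl))
  -- decompose images
  obtain ⟨p, hpw, hg1⟩ := exists_other (φ e1).2 hw1
  obtain ⟨q, hqw, hg2⟩ := exists_other (φ e2).2 hw2
  have hpq : p ≠ q := by
    rintro rfl
    exact hg12.1 (Subtype.ext (hg1.trans hg2.symm))
  have hxe : x ∈ e.1 := by rw [hex]; simp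
  -- (φ e) contains p and q
  have hadj1 : (lineK (2 * m + 1)).Adj (φ e1) (φ e) :=
    φ.map_adj (adj_of e1 e (Ne.symm hne1) hve1 hve)
  have hadj2 : (lineK (2 * m + 1)).Adj (φ e2) (φ e) :=
    φ.map_adj (adj_of e2 e (Ne.symm hne2) hve2 hve)
  have hp3 : p ∈ (φ e).1 := by
    obtain ⟨z, hz⟩ := hadj1.2
    rw [Finset.mem_inter, hg1] at hz
    simp only [Finset.mem_insert, Finset.mem_singleton] at hz
    rcases hz.1 with rfl | rfl
    · exact absurd hz.2 hwno
    · exact hz.2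
  have hq3 : q ∈ (φ e).1 := by
    obtain ⟨z, hz⟩ := hadj2.2
    rw [Finset.mem_inter, hg2] at hz
    simp only [Finset.mem_insert, Finset.mem_singleton] at hz
    rcases hz.1 with rfl | rfl
    · exact absurd hz.2 hwno
    · exact hz.2
  have hg3 : (φ e).1 = {p, q} := pair_eq_of_mem (φ e).2 hp3 hq3 hpq
  -- find a fifth point y
  have hcard4 : ({v, a, b, x} : Finset (Fin (2 * m + 1))).card = 4 := by
    rw [Finset.card_insert_of_notMem (by simp [Ne.symm hav, Ne.symm hbv, Ne.symm hxv]),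
      Finset.card_insert_of_notMem (by simp [Ne.symm hba, Ne.symm hxa]),
      Finset.card_insert_of_notMem (by simp [Ne.symm hxb]), Finset.card_singleton]
  have h4n : 4 ≤ 2 * m + 1 := by
    have := Finset.card_le_card
      (Finset.subset_univ ({v, a, b, x} : Finset (Fin (2 * m + 1))))
    rw [hcard4, Finset.card_fin] at this
    exact this
  obtain ⟨y, hy⟩ := exists_fresh ({v, a, b, x} : Finset (Fin (2 * m + 1)))
    (by omega)
  simp only [Finset.mem_insert, Finset.mem_singleton, not_or] at hy
  obtain ⟨hyv, hya, hyb, hyx⟩ := hy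
  set e4 : EV (2 * m + 1) := ed (Ne.symm hyv) with he4
  have hve4 : v ∈ e4.1 := by simp [he4, ed]
  have hne41 : e4 ≠ e1 := by
    intro hcon
    have : ({v, y} : Finset (Fin (2 * m + 1))) = {v, a} := congrArg Subtype.val hcon
    have : y ∈ ({v, a} : Finset (Fin (2 * m + 1))) := by rw [← this]; simp
    simp only [Finset.mem_insert, Finset.mem_singleton] at this
    tauto
  have hne42 : e4 ≠ e2 := by
    intro hcon
    have : ({v, y} : Finset (Fin (2 * m + 1))) = {v, b} := congrArg Subtype.val hcon
    have : y ∈ ({v, b} : Finset (Fin (2 * m + 1))) := by rw [← this]; simp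
    simp only [Finset.mem_insert, Finset.mem_singleton] at this
    tauto
  have hne43 : e4 ≠ e := by
    intro hcon
    have hcon' : ({v, y} : Finset (Fin (2 * m + 1))) = e.1 := congrArg Subtype.val hcon
    have : y ∈ e.1 := by rw [← hcon']; simp
    rw [hex] at this
    simp only [Finset.mem_insert, Finset.mem_singleton] at this
    tauto
  have hadj41 : (lineK (2 * m + 1)).Adj (φ e4) (φ e1) :=
    φ.map_adj (adj_of e4 e1 hne41 hve4 hve1)
  have hadj42 : (lineK (2 * m + 1)).Adj (φ e4) (φ e2) :=
    φ.map_adj (adj_of e4 e2 hne42 hve4 hve2)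
  have hadj43 : (lineK (2 * m + 1)).Adj (φ e4) (φ e) :=
    φ.map_adj (adj_of e4 e hne43 hve4 hve)
  by_cases hw4 : w ∈ (φ e4).1
  · obtain ⟨s, hsw, hg4⟩ := exists_other (φ e4).2 hw4
    -- (φ e4) meets (φ e) = {p, q}
    obtain ⟨z, hz⟩ := hadj43.2
    rw [Finset.mem_inter, hg4, hg3] at hz
    simp only [Finset.mem_insert, Finset.mem_singleton] at hz
    rcases hz.1 with rfl | rfl
    · rcases hz.2 with rfl | rfl
      · exact hpw rfl
      · exact hqw rfl
    · rcases hz.2 with rfl | rfl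
      · exact hadj41.1 (Subtype.ext (hg4.trans hg1.symm))
      · exact hadj42.1 (Subtype.ext (hg4.trans hg2.symm))
  · have hp4 : p ∈ (φ e4).1 := by
      obtain ⟨z, hz⟩ := hadj41.2
      rw [Finset.mem_inter, hg1] at hz
      simp only [Finset.mem_insert, Finset.mem_singleton] at hz
      rcases hz.2 with rfl | rfl
      · exact absurd hz.1 hw4
      · exact hz.1
    have hq4 : q ∈ (φ e4).1 := by
      obtain ⟨z, hz⟩ := hadj42.2
      rw [Finset.mem_inter, hg2] at hz
      simp only [Finset.mem_insert, Finset.mem_singleton] at hz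
      rcases hz.2 with rfl | rfl
      · exact absurd hz.1 hw4
      · exact hz.1
    have : (φ e4).1 = {p, q} := pair_eq_of_mem (φ e4).2 hp4 hq4 hpq
    exact hadj43.1 (Subtype.ext (this.trans hg3.symm))

end Aux

/-- `L(K_{2m+1})` is a core: every endomorphism is an automorphism. -/
theorem lineK_odd_is_core (m : ℕ) (hm : 1 ≤ m)
    (φ : lineK (2 * m + 1) →g lineK (2 * m + 1)) :
    Function.Bijective φ := by
  classical
  rw [← Finite.injective_iff_bijective]
  choose σ hσ using (fun v => exists_common m hm φ v)
  by_cases hinj : Function.Injective σ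
  · intro e f hef
    obtain ⟨p, q, hpq, hep⟩ := Finset.card_eq_two.1 e.2
    obtain ⟨r, s, hrs, hfr⟩ := Finset.card_eq_two.1 f.2
    have h1 : σ p ∈ (φ e).1 := hσ p e (by rw [hep]; simp)
    have h2 : σ q ∈ (φ e).1 := hσ q e (by rw [hep]; simp)
    have h3 : σ r ∈ (φ f).1 := hσ r f (by rw [hfr]; simp)
    have h4 : σ s ∈ (φ f).1 := hσ s f (by rw [hfr]; simp)
    have hσpq : σ p ≠ σ q := fun h => hpq (hinj h)
    have hσrs : σ r ≠ σ s := fun h => hrs (hinj h)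
    have he' : (φ e).1 = {σ p, σ q} := pair_eq_of_mem (φ e).2 h1 h2 hσpq
    have hf' : (φ f).1 = {σ r, σ s} := pair_eq_of_mem (φ f).2 h3 h4 hσrs
    have hpair : ({σ p, σ q} : Finset (Fin (2 * m + 1))) = {σ r, σ s} := by
      rw [← he', ← hf', hef]
    have hpmem : p ∈ ({r, s} : Finset (Fin (2 * m + 1))) := by
      have : σ p ∈ ({σ r, σ s} : Finset (Fin (2 * m + 1))) := by
        rw [← hpair]; simp
      simp only [Finset.mem_insert, Finset.mem_singleton] at this ⊢
      rcases this with h | h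
      · exact Or.inl (hinj h)
      · exact Or.inr (hinj h)
    have hqmem : q ∈ ({r, s} : Finset (Fin (2 * m + 1))) := by
      have : σ q ∈ ({σ r, σ s} : Finset (Fin (2 * m + 1))) := by
        rw [← hpair]; simp
      simp only [Finset.mem_insert, Finset.mem_singleton] at this ⊢
      rcases this with h | h
      · exact Or.inl (hinj h)
      · exact Or.inr (hinj h)
    apply Subtype.ext
    rw [hep, hfr]
    exact (pair_eq_of_mem (by rw [Finset.card_pair hrs]) hpmem hqmem hpq).symm
  · exfalso
    rw [Function.not_injective_iff] at hinj
    obtain ⟨u, v, huv, hneuv⟩ := hinj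
    set w := σ u with hwdef
    have hall : ∀ x, σ x = w := by
      intro x
      by_cases hxu : x = u
      · rw [hxu]
      by_cases hxv : x = v
      · rw [hxv, ← huv]
      by_contra hxw
      have hux : u ≠ x := fun h => hxu h.symm
      have hvx : v ≠ x := fun h => hxv h.symm
      set eux : EV (2 * m + 1) := ed hux with heux
      set evx : EV (2 * m + 1) := ed hvx with hevx
      have hA : w ∈ (φ eux).1 := hσ u eux (by simp [heux, ed])
      have hB : σ x ∈ (φ eux).1 := hσ x eux (by simp [heux, ed])
      have hC : w ∈ (φ evx).1 := by
        have := hσ v evx (by simp [hevx, ed])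
        rwa [← huv] at this
      have hD : σ x ∈ (φ evx).1 := hσ x evx (by simp [hevx, ed])
      have h1 : (φ eux).1 = {w, σ x} :=
        pair_eq_of_mem (φ eux).2 hA hB (fun h => hxw h.symm)
      have h2 : (φ evx).1 = {w, σ x} :=
        pair_eq_of_mem (φ evx).2 hC hD (fun h => hxw h.symm)
      have hne : eux ≠ evx := by
        intro hcon
        have : ({u, x} : Finset (Fin (2 * m + 1))) = {v, x} := congrArg Subtype.val hcon
        have : u ∈ ({v, x} : Finset (Fin (2 * m + 1))) := by rw [← this]; simp
        simp only [Finset.mem_insert, Finset.mem_singleton] at this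
        tauto
      have hadj : (lineK (2 * m + 1)).Adj eux evx :=
        adj_of eux evx hne (x := x) (by simp [heux, ed]) (by simp [hevx, ed])
      exact (φ.map_adj hadj).1 (Subtype.ext (h1.trans h2.symm))
    apply no_const_star m hm φ w
    intro e
    obtain ⟨p, q, hpq, hep⟩ := Finset.card_eq_two.1 e.2
    have := hσ p e (by rw [hep]; simp)
    rwa [hall p] at this
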